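/- With the definitions and assumptions in the context, suppose x_0 ∈ S̄_* and there exists t₁ ≥ 0 with x(t₁) ∈ bd S̄_* (the topological boundary of S̄_*). Then there exists τ ∈ (0, T_s] such that x(t₁ + τ) ∈ S̄_* ⊆ S_s. (If the trajectory leaves S̄_* at some time, it returns to S̄_* within one sample period T_s.) -/

import Mathlib

open Set

/-- Under the semiflow `φ` on `ℝ^n` with safe set `S_s = {h_s ≥ 0}`, backup
safe set `S_b = {h_b ≥ 0}` with `S_b ⊆ S_s` forward invariant under `φ`, `T_s = T/N`,
continuous `h̄_*(x) = min{h_b(φ(x,N·T_s)), min_{i∈{0,…,N}} h_s(φ(x,i·T_s))}`,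
`S̄_* = {x : h̄_*(x) ≥ 0}`, `Γ ⊆ {x : h̄_*(x) > 0}`, and a closed-loop trajectory `x(·)`
with `x(0) = x₀ ∈ S̄_*` satisfying the backup-flow property (if `x(τ) ∉ Γ` for all
`τ ∈ [t₂,t₃]` then `x(t₃) = φ(x(t₂), t₃ − t₂)`): if `x(t₁) ∈ bd S̄_*` for some `t₁ ≥ 0`,
then there exists `τ ∈ (0, T_s]` with `x(t₁+τ) ∈ S̄_* ⊆ S_s`. -/
theorem return_to_SbarStar_within_one_sample_period
    (n : ℕ) (hn : 0 < n)
    (φ : EuclideanSpace ℝ (Fin n) → ℝ → EuclideanSpace ℝ (Fin n))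
    (hφ0 : ∀ x, φ x 0 = x)
    (hφadd : ∀ (x : EuclideanSpace ℝ (Fin n)) (s t : ℝ), 0 ≤ s → 0 ≤ t →
      φ x (s + t) = φ (φ x s) t)
    (hs hb : EuclideanSpace ℝ (Fin n) → ℝ)
    (Ss Sb : Set (EuclideanSpace ℝ (Fin n)))
    (hSs : Ss = {x | 0 ≤ hs x})
    (hSb : Sb = {x | 0 ≤ hb x})
    (hsub : Sb ⊆ Ss)
    (hinv : ∀ x ∈ Sb, ∀ t : ℝ, 0 ≤ t → φ x t ∈ Sb)
    (T : ℝ) (hT : 0 < T)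
    (N : ℕ) (hN : 0 < N) (Ts : ℝ) (hTs : Ts = T / N)
    (hbarStar : EuclideanSpace ℝ (Fin n) → ℝ)
    (hhbarStar : ∀ x, hbarStar x =
      min (hb (φ x ((N : ℝ) * Ts)))
        ((Finset.range (N + 1)).inf' Finset.nonempty_range_add_one
          (fun i => hs (φ x ((i : ℝ) * Ts)))))
    (hbarStar_cont : Continuous hbarStar)
    (SbarStar : Set (EuclideanSpace ℝ (Fin n)))
    (hSbarStar : SbarStar = {x | 0 ≤ hbarStar x})
    (Γ : Set (EuclideanSpace ℝ (Fin n)))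
    (hΓ : Γ ⊆ {x | 0 < hbarStar x})
    (xtraj : ℝ → EuclideanSpace ℝ (Fin n))
    (x₀ : EuclideanSpace ℝ (Fin n))
    (hxtraj0 : xtraj 0 = x₀)
    (hx₀ : x₀ ∈ SbarStar)
    (hflow : ∀ t₂ t₃ : ℝ, 0 ≤ t₂ → t₂ ≤ t₃ →
      (∀ τ ∈ Icc t₂ t₃, xtraj τ ∉ Γ) → xtraj t₃ = φ (xtraj t₂) (t₃ - t₂))
    (t₁ : ℝ) (ht₁ : 0 ≤ t₁)
    (hbd : xtraj t₁ ∈ frontier SbarStar) :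
    (∃ τ : ℝ, 0 < τ ∧ τ ≤ Ts ∧ xtraj (t₁ + τ) ∈ SbarStar) ∧ SbarStar ⊆ Ss := by

  have hTspos : 0 < Ts := by
    rw [hTs]; exact div_pos hT (by exact_mod_cast hN)
  have hclosed : IsClosed SbarStar := by
    rw [hSbarStar]
    exact isClosed_le continuous_const hbarStar_cont
  have hopen : IsOpen {x : EuclideanSpace ℝ (Fin n) | 0 < hbarStar x} :=
    isOpen_lt continuous_const hbarStar_cont
  have hsubset : {x : EuclideanSpace ℝ (Fin n) | 0 < hbarStar x} ⊆ interior SbarStar := by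
    apply interior_maximal _ hopen
    rw [hSbarStar]; exact fun x hx => le_of_lt (mem_setOf_eq ▸ hx)
  have hSS : SbarStar ⊆ Ss := by
    intro y hy
    rw [hSbarStar, mem_setOf_eq, hhbarStar] at hy
    have h2 := le_trans hy (min_le_right _ _)
    have h3 := le_trans h2 (Finset.inf'_le _ (by simp : (0:ℕ) ∈ Finset.range (N+1)))
    simp only [Nat.cast_zero, zero_mul, hφ0] at h3
    rw [hSs]; exact h3
  have key : ∀ y, 0 ≤ hbarStar y → 0 ≤ hbarStar (φ y Ts) := by
    intro y hy
    rw [hhbarStar] at hy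
    have hb0 : 0 ≤ hb (φ y ((N:ℝ) * Ts)) := le_trans hy (min_le_left _ _)
    have hs0 : ∀ i ∈ Finset.range (N+1), 0 ≤ hs (φ y ((i:ℝ) * Ts)) := by
      intro i hi
      exact le_trans (le_trans hy (min_le_right _ _)) (Finset.inf'_le _ hi)
    have hmemSb : φ y ((N:ℝ)*Ts) ∈ Sb := by rw [hSb]; exact hb0
    have hstep : ∀ t : ℝ, 0 ≤ t → φ (φ y Ts) t = φ y (Ts + t) := by
      intro t ht; rw [hφadd y Ts t hTspos.le ht]
    have hNpos : (0:ℝ) ≤ (N:ℝ) * Ts := by positivity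
    have hNext : φ y ((N:ℝ)*Ts + Ts) ∈ Sb := by
      rw [hφadd y ((N:ℝ)*Ts) Ts hNpos hTspos.le]
      exact hinv _ hmemSb Ts hTspos.le
    rw [hhbarStar]
    refine le_min ?_ ?_
    · rw [hstep _ hNpos]
      have heq : Ts + (N:ℝ)*Ts = (N:ℝ)*Ts + Ts := by ring
      rw [heq]
      have := hNext; rw [hSb] at this; exact this
    · apply Finset.le_inf'
      intro i hi
      have hipos : (0:ℝ) ≤ (i:ℝ) * Ts := by positivity
      rw [hstep _ hipos]
      have heq : Ts + (i:ℝ)*Ts = ((i+1 : ℕ):ℝ)*Ts := by push_cast; ring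
      rw [heq]
      have hiN : i ≤ N := Nat.lt_succ_iff.mp (Finset.mem_range.mp hi)
      rcases lt_or_eq_of_le hiN with hlt | hEq
      · exact hs0 (i+1) (Finset.mem_range.2 (Nat.succ_lt_succ hlt))
      · subst hEq
        have heq2 : ((i+1 : ℕ):ℝ)*Ts = (i:ℝ)*Ts + Ts := by push_cast; ring
        rw [heq2]
        have := hsub hNext
        rw [hSs] at this
        exact this
  have hxt1 : xtraj t₁ ∈ SbarStar := hclosed.frontier_subset hbd
  have hxt1' : 0 ≤ hbarStar (xtraj t₁) := by rw [hSbarStar] at hxt1; exact hxt1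
  have hnotint : xtraj t₁ ∉ interior SbarStar := hbd.2
  have hnotΓ : xtraj t₁ ∉ Γ := fun h => hnotint (hsubset (hΓ h))
  constructor
  · by_cases hcase : ∀ τ ∈ Icc t₁ (t₁ + Ts), xtraj τ ∉ Γ
    · refine ⟨Ts, hTspos, le_refl _, ?_⟩
      have hfl := hflow t₁ (t₁ + Ts) ht₁ (by linarith) hcase
      rw [hfl]
      have heq : t₁ + Ts - t₁ = Ts := by ring
      rw [heq, hSbarStar]
      exact key _ hxt1'
    · push_neg at hcase
      obtain ⟨τ', hτ'mem, hτ'Γ⟩ := hcase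
      refine ⟨τ' - t₁, ?_, by linarith [hτ'mem.2], ?_⟩
      · rcases lt_or_eq_of_le hτ'mem.1 with h | h
        · linarith
        · exact absurd (h ▸ hτ'Γ) hnotΓ
      · have hmem : xtraj τ' ∈ SbarStar := by
          rw [hSbarStar]; exact le_of_lt (mem_setOf_eq ▸ hΓ hτ'Γ)
        have heq : t₁ + (τ' - t₁) = τ' := by ring
        rw [heq]; exact hmem
  · exact hSS
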